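/- Let X ∈ 𝓘 and i ∉ X be such that X ∪ {i} ∈ 𝓘, and let r' ≤ r be natural numbers with |X ∪ {i}| ≤ r'. Then the marginal loss from contracting i is larger at the smaller rank: f_r(X) − f_r(X ∪ {i}) ≤ f_{r'}(X) − f_{r'}(X ∪ {i}). -/
import Mathlib


open Finset

/-- `Y` is feasible for `(X, r)`: it is disjoint from `X`, `X ∪ Y` is independent in the
matroid `M`, and `|X ∪ Y| ≤ r`. -/
def MatroidFeasible {α : Type*} [DecidableEq α] (M : Matroid α) (r : ℕ)
    (X Y : Finset α) : Prop :=
  Disjoint X Y ∧ M.Indep ↑(X ∪ Y) ∧ (X ∪ Y).card ≤ r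

/-- `truncOpt M w r X = f_r(X)`: the maximum weight `w(Y)` over all sets `Y` feasible for
`(X, r)`, i.e. the weight of a maximum-weight basis of the matroid contracted by `X` and
truncated at rank `r`. -/
noncomputable def truncOpt {α : Type*} [DecidableEq α] (M : Matroid α) (w : α → ℝ)
    (r : ℕ) (X : Finset α) : ℝ :=
  sSup {t : ℝ | ∃ Y : Finset α, MatroidFeasible M r X Y ∧ t = ∑ e ∈ Y, w e}

/-- Iterated augmentation: a smaller independent finset can be grown inside the union
to match the cardinality of a larger independent finset. -/
lemma matroid_finset_augment {α : Type*} [DecidableEq α] (M : Matroid α) :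
    ∀ (n : ℕ) (I J : Finset α), J.card ≤ I.card + n → M.Indep ↑I → M.Indep ↑J →
      I.card ≤ J.card →
      ∃ K : Finset α, I ⊆ K ∧ K ⊆ I ∪ J ∧ M.Indep ↑K ∧ K.card = J.card := by
  intro n
  induction n with
  | zero =>
    intro I J hn hI hJ hle
    exact ⟨I, subset_rfl, subset_union_left, hI, le_antisymm hle (by omega)⟩
  | succ n ih =>
    intro I J hn hI hJ hle
    rcases eq_or_lt_of_le hle with h | h
    · exact ⟨I, subset_rfl, subset_union_left, hI, h⟩
    · obtain ⟨e, he, hind⟩ := hI.augment hJ (by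
        rwa [Set.encard_coe_eq_coe_finsetCard, Set.encard_coe_eq_coe_finsetCard,
          Nat.cast_lt])
      obtain ⟨heJ, heI⟩ := he
      have heJ' : e ∈ J := heJ
      have heI' : e ∉ I := heI
      have hind' : M.Indep ↑(insert e I) := by rw [coe_insert]; exact hind
      obtain ⟨K, h1, h2, h3, h4⟩ := ih (insert e I) J
        (by rw [card_insert_of_notMem heI']; omega) hind' hJ
        (by rw [card_insert_of_notMem heI']; omega)
      refine ⟨K, (subset_insert _ _).trans h1, h2.trans ?_, h3, h4⟩
      apply union_subset _ subset_union_right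
      exact insert_subset (mem_union_right _ heJ') subset_union_left

lemma truncOpt_set_finite {α : Type*} [DecidableEq α] [Fintype α] (M : Matroid α)
    (w : α → ℝ) (r : ℕ) (X : Finset α) :
    {t : ℝ | ∃ Y : Finset α, MatroidFeasible M r X Y ∧ t = ∑ e ∈ Y, w e}.Finite := by
  apply Set.Finite.subset (Set.finite_range (fun Y : Finset α => ∑ e ∈ Y, w e))
  rintro t ⟨Y, _, rfl⟩
  exact ⟨Y, rfl⟩

lemma le_truncOpt {α : Type*} [DecidableEq α] [Fintype α] (M : Matroid α)
    (w : α → ℝ) (r : ℕ) (X Y : Finset α) (hY : MatroidFeasible M r X Y) :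
    ∑ e ∈ Y, w e ≤ truncOpt M w r X :=
  le_csSup (truncOpt_set_finite M w r X).bddAbove ⟨Y, hY, rfl⟩

lemma truncOpt_exists {α : Type*} [DecidableEq α] [Fintype α] (M : Matroid α)
    (w : α → ℝ) (r : ℕ) (X : Finset α) (hne : MatroidFeasible M r X ∅) :
    ∃ Y : Finset α, MatroidFeasible M r X Y ∧ truncOpt M w r X = ∑ e ∈ Y, w e := by
  have hnonempty : {t : ℝ | ∃ Y : Finset α, MatroidFeasible M r X Y ∧
      t = ∑ e ∈ Y, w e}.Nonempty := ⟨_, ∅, hne, rfl⟩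
  have hmem := hnonempty.csSup_mem (truncOpt_set_finite M w r X)
  obtain ⟨Y, hY, hYe⟩ := hmem
  exact ⟨Y, hY, hYe⟩

/-- The marginal loss from contracting one element `i` is larger at a smaller rank:
for independent `X`, `i ∉ X` with `X ∪ {i}` independent, `|X ∪ {i}| ≤ r' ≤ r`, we have
`f_r(X) − f_r(X ∪ {i}) ≤ f_{r'}(X) − f_{r'}(X ∪ {i})`. -/
theorem truncOpt_marginal_loss_mono_rank
    {α : Type*} [DecidableEq α] [Fintype α] (M : Matroid α) (w : α → ℝ)
    (hw : ∀ e, 0 ≤ w e) (r r' : ℕ) (hrr : r' ≤ r)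
    (X : Finset α) (i : α) (hiX : i ∉ X)
    (hX : M.Indep ↑X) (hXi : M.Indep ↑(insert i X))
    (hcard : (insert i X).card ≤ r') :
    truncOpt M w r X - truncOpt M w r (insert i X) ≤
      truncOpt M w r' X - truncOpt M w r' (insert i X) := by
  have hXcard : X.card ≤ r' := le_trans (card_le_card (subset_insert i X)) hcard
  -- empty set feasibility
  have hemptyX : ∀ s : ℕ, X.card ≤ s → MatroidFeasible M s X ∅ := by
    intro s hs
    refine ⟨disjoint_empty_right X, ?_, ?_⟩ <;> rw [union_empty]
    exacts [hX, hs]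
  have hemptyXi : ∀ s : ℕ, (insert i X).card ≤ s → MatroidFeasible M s (insert i X) ∅ := by
    intro s hs
    refine ⟨disjoint_empty_right _, ?_, ?_⟩ <;> rw [union_empty]
    exacts [hXi, hs]
  obtain ⟨A, hA, hAe⟩ := truncOpt_exists M w r X (hemptyX r (le_trans hXcard (le_trans hrr le_rfl)))
  obtain ⟨B, hB, hBe⟩ := truncOpt_exists M w r' (insert i X) (hemptyXi r' hcard)
  rw [sub_le_sub_iff, hAe, hBe]
  -- It suffices to find Z feasible for (X, r') and Z' feasible for (insert i X, r) with
  -- w(A) + w(B) ≤ w(Z) + w(Z').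
  obtain ⟨hAd, hAi, hAc⟩ := hA
  obtain ⟨hBd, hBi, hBc⟩ := hB
  set I : Finset α := insert i X ∪ B with hI
  set J : Finset α := X ∪ A with hJ
  rcases le_or_gt J.card I.card with hle | hlt
  · -- A itself is feasible at rank r', B is feasible at rank r
    have hZ : MatroidFeasible M r' X A := ⟨hAd, hAi, le_trans hle hBc⟩
    have hZ' : MatroidFeasible M r (insert i X) B := ⟨hBd, hBi, le_trans hBc hrr⟩
    exact add_le_add (le_truncOpt M w r' X A hZ)
      (le_truncOpt M w r (insert i X) B hZ')
  · obtain ⟨K, hIK, hKIJ, hKind, hKcard⟩ :=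
      matroid_finset_augment M J.card I J (by omega) hBi hAi (le_of_lt hlt)
    set T : Finset α := K \ I with hT
    have hTA : T ⊆ A := by
      intro x hx
      rw [hT, mem_sdiff] at hx
      obtain ⟨hxK, hxI⟩ := hx
      have := hKIJ hxK
      rw [mem_union] at this
      rcases this with h | h
      · exact absurd h hxI
      · rw [hJ, mem_union] at h
        rcases h with h | h
        · exact absurd (mem_union_left _ (mem_insert_of_mem h)) hxI
        · exact h
    have hTIdisj : Disjoint I T := by
      rw [hT]; exact disjoint_sdiff
    have hKeq : K = I ∪ T := by
      rw [hT, union_sdiff_of_subset hIK]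
    have hTcard : T.card = K.card - I.card := by
      rw [hT, card_sdiff_of_subset hIK]
    have hIKcard : I.card ≤ K.card := card_le_card hIK
    have hJcard : J.card = X.card + A.card := card_union_of_disjoint hAd
    -- Z' := B ∪ T is feasible for (insert i X, r)
    have hZ' : MatroidFeasible M r (insert i X) (B ∪ T) := by
      refine ⟨?_, ?_, ?_⟩
      · rw [disjoint_union_right]
        exact ⟨hBd, Disjoint.mono_left (subset_union_left) hTIdisj⟩
      · have : insert i X ∪ (B ∪ T) = K := by
          rw [← union_assoc, ← hI, ← hKeq]
        rw [this]; exact hKind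
      · have : insert i X ∪ (B ∪ T) = K := by
          rw [← union_assoc, ← hI, ← hKeq]
        rw [this, hKcard]; exact hAc
    -- Z := A \ T is feasible for (X, r')
    have hZ : MatroidFeasible M r' X (A \ T) := by
      refine ⟨disjoint_of_subset_right (sdiff_subset) hAd, ?_, ?_⟩
      · apply hAi.subset
        rw [hJ, coe_union, coe_union, coe_sdiff]
        exact Set.union_subset Set.subset_union_left
          (Set.diff_subset.trans Set.subset_union_right)
      · have hdisj : Disjoint X (A \ T) := disjoint_of_subset_right (sdiff_subset) hAd
        rw [card_union_of_disjoint hdisj, card_sdiff_of_subset hTA]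
        have hTA' : T.card ≤ A.card := card_le_card hTA
        omega
    have hWsum : ∑ e ∈ A, w e + ∑ e ∈ B, w e
        = ∑ e ∈ A \ T, w e + ∑ e ∈ B ∪ T, w e := by
      have hBT : Disjoint B T := Disjoint.mono_left (subset_union_right) hTIdisj
      rw [sum_union hBT, ← Finset.sum_sdiff hTA]
      ring
    rw [hWsum]
    exact add_le_add (le_truncOpt M w r' X (A \ T) hZ)
      (le_truncOpt M w r (insert i X) (B ∪ T) hZ')
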